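/- For any field F with a non-commuting pair (u,v) in H(F), the element h(0,0,Δ_{(u,v)}) is a multiplicative identity for the Maltsev multiplication ⊗_{(u,v)} on Z(H(F)): for every x ∈ Z(H(F)), x ⊗_{(u,v)} h(0,0,Δ_{(u,v)}) = x. -/

import Mathlib

/-- The Heisenberg group over a field `F`: 3×3 upper unitriangular matrices,
represented by their entries `a` at (1,2), `b` at (2,3), `c` at (1,3),
with multiplication induced by matrix multiplication. -/
@[ext] structure Heis (F : Type*) [Field F] where
  a : F
  b : F
  c : F

namespace Heis

variable {F : Type*} [Field F]

instance : Mul (Heis F) := ⟨fun x y => ⟨x.a + y.a, x.b + y.b, x.c + y.c + x.a * y.b⟩⟩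
instance : One (Heis F) := ⟨⟨0, 0, 0⟩⟩
instance : Inv (Heis F) := ⟨fun x => ⟨-x.a, -x.b, x.a * x.b - x.c⟩⟩

@[simp] theorem mul_a (x y : Heis F) : (x * y).a = x.a + y.a := rfl
@[simp] theorem mul_b (x y : Heis F) : (x * y).b = x.b + y.b := rfl
@[simp] theorem mul_c (x y : Heis F) : (x * y).c = x.c + y.c + x.a * y.b := rfl
@[simp] theorem one_a : (1 : Heis F).a = 0 := rfl
@[simp] theorem one_b : (1 : Heis F).b = 0 := rfl
@[simp] theorem one_c : (1 : Heis F).c = 0 := rfl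
@[simp] theorem inv_a (x : Heis F) : (x⁻¹).a = -x.a := rfl
@[simp] theorem inv_b (x : Heis F) : (x⁻¹).b = -x.b := rfl
@[simp] theorem inv_c (x : Heis F) : (x⁻¹).c = x.a * x.b - x.c := rfl

instance : Group (Heis F) where
  mul_assoc x y z := by ext <;> simp <;> ring
  one_mul x := by ext <;> simp
  mul_one x := by ext <;> simp
  inv_mul_cancel x := by ext <;> simp <;> ring

/-- `h a b c` is the unitriangular matrix with superdiagonal entries `a`, `b`
and corner entry `c`. -/
def h (a b c : F) : Heis F := ⟨a, b, c⟩

/-- `Δ u v = u₁v₂ - u₂v₁`. -/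
def Δ (u v : Heis F) : F := u.a * v.b - u.b * v.a

end Heis


namespace Heis

variable {F : Type*} [Field F]

/-- Maltsev's multiplication relation on the center, with parameters `u`, `v`:
`MulR u v x y z` holds iff there exist `x'`, `y'` with `[x',u] = [y',v] = 1`,
`[x',v] = x`, `[u,y'] = y`, and `[x',y'] = z`. -/
def MulR (u v x y z : Heis F) : Prop :=
  ∃ x' y' : Heis F,
    x'⁻¹ * u⁻¹ * x' * u = 1 ∧
    y'⁻¹ * v⁻¹ * y' * v = 1 ∧
    x'⁻¹ * v⁻¹ * x' * v = x ∧
    u⁻¹ * y'⁻¹ * u * y' = y ∧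
    x'⁻¹ * y'⁻¹ * x' * y' = z

/-- `g u v : F → Z(H(F))`, the map `α ↦ h 0 0 (α·Δ u v)`. -/
def g (u v : Heis F) (α : F) : Heis F := h 0 0 (α * Δ u v)

/-- The canonical isomorphism `f_{(u,v),(u',v')} = g_{(u',v')} ∘ g_{(u,v)}⁻¹`
between the Maltsev copies of `F` (for `x` in the center, `g_{(u,v)}⁻¹ x = x.c / Δ u v`). -/
def f (u v u' v' : Heis F) (x : Heis F) : Heis F := g u' v' (x.c / Δ u v)

end Heis

open Heis

lemma heis_comm_eq {F : Type*} [Field F] (p q : Heis F) :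
    p⁻¹ * q⁻¹ * p * q = ⟨0, 0, p.a * q.b - p.b * q.a⟩ := by
  ext <;> simp <;> ring

lemma heis_center_ab {F : Type*} [Field F] {x : Heis F}
    (hx : x ∈ Subgroup.center (Heis F)) : x.a = 0 ∧ x.b = 0 := by
  rw [Subgroup.mem_center_iff] at hx
  constructor
  · have := congrArg Heis.c (hx ⟨0, 1, 0⟩)
    simpa using this
  · have := congrArg Heis.c (hx ⟨1, 0, 0⟩)
    simp at this
    exact this

/-- `h 0 0 (Δ u v)` is a multiplicative identity for the Maltsev
multiplication `⊗_{(u,v)}` on the center: `x ⊗ h 0 0 (Δ u v) = x`. -/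
theorem heis_maltsev_one (F : Type*) [Field F] (u v : Heis F)
    (huv : u * v ≠ v * u) :
    ∀ x ∈ Subgroup.center (Heis F),
      MulR u v x (h 0 0 (Δ u v)) x ∧
      (∀ z ∈ Subgroup.center (Heis F), MulR u v x (h 0 0 (Δ u v)) z → z = x) := by
  have hΔ : Δ u v ≠ 0 := by
    intro hd
    apply huv
    have : u.a * v.b - u.b * v.a = 0 := hd
    ext
    · simp; ring
    · simp; ring
    · simp
      linear_combination this
  intro x hx
  obtain ⟨hxa, hxb⟩ := heis_center_ab hx
  constructor
  · have hΔ' : u.a * v.b - u.b * v.a ≠ 0 := hΔ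
    have hc : x.c / Δ u v * u.a * v.b - x.c / Δ u v * u.b * v.a = x.c := by
      show x.c / (u.a * v.b - u.b * v.a) * u.a * v.b -
        x.c / (u.a * v.b - u.b * v.a) * u.b * v.a = x.c
      field_simp
    refine ⟨⟨(x.c / Δ u v) * u.a, (x.c / Δ u v) * u.b, 0⟩, v, ?_, ?_, ?_, ?_, ?_⟩ <;>
      rw [heis_comm_eq]
    · ext <;> simp <;> ring
    · ext <;> simp <;> ring
    · ext
      · exact hxa.symm
      · exact hxb.symm
      · exact hc
    · rfl
    · ext
      · exact hxa.symm
      · exact hxb.symm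
      · exact hc
  · rintro z hz ⟨x', y', h1, h2, h3, h4, h5⟩
    obtain ⟨hza, hzb⟩ := heis_center_ab hz
    rw [heis_comm_eq] at h1 h2 h3 h4 h5
    have e1 : x'.a * u.b - x'.b * u.a = 0 := congrArg Heis.c h1
    have e2 : y'.a * v.b - y'.b * v.a = 0 := congrArg Heis.c h2
    have e3 : x'.a * v.b - x'.b * v.a = x.c := congrArg Heis.c h3
    have e4 : u.a * y'.b - u.b * y'.a = (h 0 0 (Δ u v) : Heis F).c := congrArg Heis.c h4
    have e5 : x'.a * y'.b - x'.b * y'.a = z.c := congrArg Heis.c h5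
    have e4' : u.a * y'.b - u.b * y'.a = u.a * v.b - u.b * v.a := e4
    have key : z.c = x.c := by
      apply mul_right_cancel₀ hΔ
      show z.c * Δ u v = x.c * Δ u v
      unfold Δ
      linear_combination (u.a*v.b-u.b*v.a)*e3 + (x'.a*v.b-x'.b*v.a)*e4' +
        (y'.a*v.b-y'.b*v.a)*e1 - (u.a*v.b-u.b*v.a)*e5
    ext
    · rw [hza, hxa]
    · rw [hzb, hxb]
    · exact key
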